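/- arXiv:2209.12581 — 3 statements merged into one kernel-verified Lean document; each statement's English description precedes it below -/
import Mathlib

section
/- Let E ≥ 1 and let O : ℕ → ℕ be monotonically increasing on evaluation steps (multiples of E). Let S, L be length sequences of the Two-Tailed Averaging algorithm such that S(n) < O(n) at every evaluation step n, and at every evaluation step either L(n) = S(n) (no switch has yet occurred) or L(n) = S(n) + S'(m) where m ≤ n is the most recent switch point and S'(m) = S(m−E) + E is the final length of the previous short average. Then L(n) < 2·O(n) + E at every evaluation step n. -/
/-- Proposition 1 (second half): indexed by evaluation count `k` (step `n = k * E`).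
At every evaluation step, either no switch has occurred yet and `L k = S k`, or
`L k = S k + S' m` where `m` is the most recent switch point and
`S' m = S (m - 1) + E` is the final length of the previous short average.
Together with `S k < O k` and monotonicity of `O`, `L` is less than twice the
optimal length plus one evaluation period. -/
theorem stmt_4 (E : ℕ) (hE : 1 ≤ E) (O S L : ℕ → ℕ)
    (hO : Monotone O)
    (hSopt : ∀ k, S k < O k)
    (hL : ∀ k, L k = S k ∨
          ∃ m, 1 ≤ m ∧ m ≤ k ∧ L k = S k + (S (m - 1) + E)) :
    ∀ k, L k < 2 * O k + E := by
  intro k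
  rcases hL k with h | ⟨m, hm1, hmk, h⟩
  · have := hSopt k
    omega
  · have h1 := hSopt k
    have h2 := hSopt (m - 1)
    have h3 : O (m - 1) ≤ O k := hO (by omega)
    omega
end

section
/- Let E ≥ 1, let O : ℕ → ℕ be monotonically increasing on evaluation steps, and define O_E(n) = ⌊O(n)/E⌋·E and O^E(n) = ⌈O(n)/E⌉·E. Let n₁ < n₂ be two consecutive switch points of the Two-Tailed Averaging length process, meaning: L(n₁) equals the final length S'(n₁) of the previous short average with S'(n₁) ≤ O^E(n₁), L increases by E at each evaluation step on (n₁, n₂], and for n₂ to be a switch point it holds that O(n₂) < L(n₂ − E) + E. Then there exists an evaluation step n ∈ [n₁, n₂ − E] with L(n) = O^E(n) or L(n) = O_E(n). -/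
private lemma dvd_le_of_lt_add' (E a b : ℕ) (ha : E ∣ a) (hb : E ∣ b)
    (h : a < b + E) : a ≤ b := by
  obtain ⟨x, rfl⟩ := ha
  obtain ⟨y, rfl⟩ := hb
  rcases Nat.eq_zero_or_pos E with rfl | hE
  · simp
  · have hx : x < y + 1 := by
      have h' : E * x < E * (y + 1) := by rw [Nat.mul_succ]; omega
      exact Nat.lt_of_mul_lt_mul_left h'
    exact Nat.mul_le_mul_left E (by omega)

private lemma le_ceil' (E A : ℕ) (hE : 1 ≤ E) : A ≤ ((A + E - 1) / E) * E := by
  have h1 := Nat.div_add_mod (A + E - 1) E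
  have h2 : (A + E - 1) % E < E := Nat.mod_lt _ (by omega)
  rw [mul_comm]
  generalize hm : E * ((A + E - 1) / E) = m at h1 ⊢
  omega

private lemma ceil_le_floor' (E A : ℕ) (hE : 1 ≤ E) :
    ((A + E - 1) / E) * E ≤ (A / E) * E + E := by
  have h : (A + E - 1) / E ≤ A / E + 1 := by
    calc (A + E - 1) / E ≤ (A + E) / E := Nat.div_le_div_right (by omega)
      _ = A / E + 1 := Nat.add_div_right A (by omega)
  calc ((A + E - 1) / E) * E ≤ (A / E + 1) * E := Nat.mul_le_mul_right E h
    _ = (A / E) * E + E := by ring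

/-- Proposition 3 (once-in-a-while optimality), indexed by evaluation count `k`
(evaluation step `n = k * E`); lengths are numbers of iterates.  `O` is the optimal
length, `O_E k = (O k / E) * E` rounds it down and `((O k + E - 1) / E) * E` rounds
it up to a multiple of `E`.  Between two consecutive switch points `k₁ < k₂`:
at `k₁` the long average continues the previous short average with
`L k₁ ≤ ⌈O k₁ / E⌉ E`, `L` grows by `E` at each evaluation, and for `k₂` to be a
switch point `O k₂ < L (k₂ - 1) + E`.  Then the long average is nearly optimal at
least once in `[k₁, k₂ - 1]`. -/
theorem stmt_6 (E : ℕ) (hE : 1 ≤ E) (O L : ℕ → ℕ)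
    (hO : Monotone O)
    (k₁ k₂ : ℕ) (hk : k₁ < k₂)
    (hstart : L k₁ ≤ ((O k₁ + E - 1) / E) * E)
    (hgrow : ∀ k, k₁ ≤ k → k < k₂ → L (k + 1) = L k + E)
    (hEdvd : E ∣ L k₁)
    (hend : O k₂ < L (k₂ - 1) + E) :
    ∃ k, k₁ ≤ k ∧ k ≤ k₂ - 1 ∧
      (L k = ((O k + E - 1) / E) * E ∨ L k = (O k / E) * E) := by
  classical
  have hCmono : ∀ i j, i ≤ j →
      ((O i + E - 1) / E) * E ≤ ((O j + E - 1) / E) * E := by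
    intro i j hij
    exact Nat.mul_le_mul_right E (Nat.div_le_div_right (by have := hO hij; omega))
  have hLdvd : ∀ k, k₁ ≤ k → k ≤ k₂ → E ∣ L k := by
    intro k hk1 hk2
    induction k with
    | zero =>
      have h0 : k₁ = 0 := Nat.le_zero.mp hk1
      rw [← h0]; exact hEdvd
    | succ n ih =>
      rcases Nat.lt_or_ge n k₁ with h | h
      · have hn : k₁ = n + 1 := by omega
        rw [← hn]; exact hEdvd
      · rw [hgrow n h (by omega)]
        exact Nat.dvd_add (ih h (by omega)) dvd_rfl
  set P : ℕ → Prop := fun j => k₁ ≤ j ∧ L j ≤ ((O j + E - 1) / E) * E with hPdef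
  have hk₁le : k₁ ≤ k₂ - 1 := by omega
  have hPk₁ : P k₁ := ⟨le_rfl, hstart⟩
  set k := Nat.findGreatest P (k₂ - 1) with hkdef
  have hklb : k₁ ≤ k := Nat.le_findGreatest hk₁le hPk₁
  have hkub : k ≤ k₂ - 1 := Nat.findGreatest_le _
  have hPk : P k := Nat.findGreatest_spec hk₁le hPk₁
  have hLC : L k ≤ ((O k + E - 1) / E) * E := hPk.2
  have hLkdvd : E ∣ L k := hLdvd k hklb (by omega)
  refine ⟨k, hklb, hkub, ?_⟩
  by_cases hcase : k = k₂ - 1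
  · -- boundary case
    rw [← hcase] at hend
    have hFle : (O k / E) * E ≤ L k := by
      apply dvd_le_of_lt_add' E _ _ (dvd_mul_left E _) hLkdvd
      have h1 : (O k / E) * E ≤ O k := Nat.div_mul_le_self _ _
      have h2 : O k ≤ O k₂ := hO (by omega)
      omega
    by_cases hfl : L k = (O k / E) * E
    · exact Or.inr hfl
    · left
      have hlt : (O k / E) * E < L k := lt_of_le_of_ne hFle (fun h => hfl h.symm)
      have hFE : (O k / E) * E + E ≤ L k := by
        obtain ⟨x, hx⟩ : E ∣ (O k / E) * E := dvd_mul_left E _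
        obtain ⟨y, hy⟩ := hLkdvd
        rw [hx, hy] at hlt ⊢
        have hxy : x < y := Nat.lt_of_mul_lt_mul_left hlt
        calc E * x + E = E * (x + 1) := by ring
          _ ≤ E * y := Nat.mul_le_mul_left E (by omega)
      have hCF : ((O k + E - 1) / E) * E ≤ (O k / E) * E + E :=
        ceil_le_floor' E (O k) hE
      omega
  · -- k < k₂ - 1 : the successor fails the predicate
    left
    have hnP : ¬ P (k + 1) :=
      Nat.findGreatest_is_greatest (n := k₂ - 1) (by omega) (by omega)
    simp only [hPdef] at hnP
    push_neg at hnP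
    have hCk1 : ((O (k + 1) + E - 1) / E) * E < L (k + 1) := hnP (by omega)
    have hLsucc : L (k + 1) = L k + E := hgrow k hklb (by omega)
    have hCC : ((O k + E - 1) / E) * E ≤ ((O (k + 1) + E - 1) / E) * E :=
      hCmono k (k + 1) (by omega)
    have hle : ((O k + E - 1) / E) * E ≤ L k := by
      apply dvd_le_of_lt_add' E _ _ (dvd_mul_left E _) hLkdvd
      omega
    omega
end

section
/- Let E ≥ 1 and suppose the Two-Tailed Averaging length processes satisfy: for all evaluation steps t ≥ E, L(t) ≥ S'(SP(t)) where SP(t) is the most recent switch point before t and S'(SP(t)) is the final length of the short average ending there. If the sequence of final short-average lengths (S_N) tends to infinity in probability and switch points occur infinitely often, then L(t) → ∞ in probability as t → ∞. -/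
open MeasureTheory Filter

/-- Final step of the divergence proposition: for `t ≥ E`, the long average's
length `L t` dominates the final length `S (N t)` of the most recent finished
short average (every long average except the first continues the previous short
average).  Switch points occur infinitely often, i.e. the index `N t` of the most
recent switch tends to infinity with `t`.  If the final short-average lengths
`S_N` tend to infinity in probability, then so does `L t`. -/
theorem stmt_15 {Ω : Type*} [MeasurableSpace Ω] (μ : Measure Ω)
    [IsProbabilityMeasure μ] (E : ℕ) (hE : 1 ≤ E)
    (L : ℕ → Ω → ℕ) (S : ℕ → Ω → ℕ) (N : ℕ → ℕ)
    (hdom : ∀ t, E ≤ t → ∀ ω, S (N t) ω ≤ L t ω)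
    (hinf : Tendsto N atTop atTop)
    (hS : ∀ M : ℕ, Tendsto (fun n => μ {ω | S n ω ≤ M}) atTop (nhds 0)) :
    ∀ M : ℕ, Tendsto (fun t => μ {ω | L t ω ≤ M}) atTop (nhds 0) := by
  intro M
  have hcomp : Tendsto (fun t => μ {ω | S (N t) ω ≤ M}) atTop (nhds 0) :=
    (hS M).comp hinf
  refine tendsto_of_tendsto_of_tendsto_of_le_of_le' tendsto_const_nhds hcomp
    (Eventually.of_forall fun t => zero_le) ?_
  filter_upwards [eventually_ge_atTop E] with t ht
  exact measure_mono fun ω hω => le_trans (hdom t ht ω) hω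
end
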